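/- The greedy algorithm that processes goods in non-increasing order of v(g) and allocates each good g to an agent i minimizing v_i(X_i) among agents with v_i(g) = v(g) maintains the following invariant, hence its output is EFX+: after each allocation step, for all agents i, j and every good h ∈ X_j with v_i(h) = v(h) > 0, v_i(X_i) ≥ v_i(X_j \ {h}). -/
import Mathlib


open Finset

/-- one step of the greedy algorithm maintains the EFX⁺
invariant.  If the current (non-wasteful) allocation `X` satisfies
"for all agents `i, j` and every `h ∈ X j` with `v i h = w h > 0`,
`v_i(X_i) ≥ v_i(X_j \ {h})`", the next good `g` satisfies `w g ≤ w h` for all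
already allocated `h`, and `g` is given to an agent `i` with `v i g = w g`
minimizing `v_i(X_i)` among such agents, then the invariant still holds. -/
theorem stmt_7 (A G : Type) [DecidableEq A] [DecidableEq G]
    (v : A → G → ℝ) (w : G → ℝ) (hw : ∀ g, 0 ≤ w g)
    (hres : ∀ a g, v a g = 0 ∨ v a g = w g)
    (X : A → Finset G)
    (hnonwaste : ∀ a, ∀ h ∈ X a, v a h = w h)
    (hinv : ∀ i j : A, ∀ h ∈ X j, v i h = w h → 0 < w h →
      ∑ x ∈ (X j).erase h, v i x ≤ ∑ x ∈ X i, v i x)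
    (g : G) (hgnew : ∀ a, g ∉ X a)
    (hsorted : ∀ a, ∀ h ∈ X a, w g ≤ w h)
    (i : A) (hig : v i g = w g)
    (hmin : ∀ a : A, v a g = w g → ∑ x ∈ X i, v i x ≤ ∑ x ∈ X a, v a x) :
    ∀ a b : A, ∀ h ∈ Function.update X i (insert g (X i)) b,
      v a h = w h → 0 < w h →
      ∑ x ∈ (Function.update X i (insert g (X i)) b).erase h, v a x ≤
        ∑ x ∈ Function.update X i (insert g (X i)) a, v a x := by
  have hnn : ∀ (c : A) (x : G), 0 ≤ v c x := by
    intro c x; rcases hres c x with h0 | h1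
    · rw [h0]
    · rw [h1]; exact hw x
  have hvle : ∀ (c : A) (x : G), x ∈ X i → v c x ≤ v i x := by
    intro c x hx
    rw [hnonwaste i x hx]
    rcases hres c x with h0 | h1
    · rw [h0]; exact hw x
    · rw [h1]
  intro a b h hmem hah hwh
  by_cases hb : b = i
  · rw [hb, Function.update_self] at hmem
    rw [hb]
    by_cases ha : a = i
    · rw [ha, Function.update_self]
      exact Finset.sum_le_sum_of_subset_of_nonneg (Finset.erase_subset _ _)
        (fun x _ _ => hnn i x)
    · rw [Function.update_self, Function.update_of_ne ha]
      rcases Finset.mem_insert.mp hmem with rfl | hXi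
      · -- h = g
        rw [Finset.erase_insert (hgnew i)]
        calc ∑ x ∈ X i, v a x ≤ ∑ x ∈ X i, v i x :=
              Finset.sum_le_sum (fun x hx => hvle a x hx)
          _ ≤ ∑ x ∈ X a, v a x := hmin a hah
      · -- h ∈ X i, h ≠ g
        have hne : h ≠ g := fun e => hgnew i (e ▸ hXi)
        rw [Finset.erase_insert_of_ne hne.symm,
          Finset.sum_insert (fun hc => hgnew i (Finset.mem_of_mem_erase hc))]
        rcases hres a g with h0 | h1
        · rw [h0, zero_add]
          exact hinv a i h hXi hah hwh
        · have h1' := hmin a h1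
          have hle1 : ∑ x ∈ (X i).erase h, v a x ≤ ∑ x ∈ (X i).erase h, v i x :=
            Finset.sum_le_sum (fun x hx => hvle a x (Finset.mem_of_mem_erase hx))
          have hsplit : ∑ x ∈ X i, v i x = v i h + ∑ x ∈ (X i).erase h, v i x :=
            (Finset.add_sum_erase _ _ hXi).symm
          have hih : v i h = w h := hnonwaste i h hXi
          have hwg : w g ≤ w h := hsorted i h hXi
          rw [h1]
          linarith
  · rw [Function.update_of_ne hb] at hmem
    rw [Function.update_of_ne hb]
    by_cases ha : a = i
    · rw [ha, Function.update_self, ← ha, Finset.sum_insert (ha ▸ hgnew i)]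
      have h2 := hinv a b h hmem hah hwh
      have h3 := hnn a g
      linarith
    · rw [Function.update_of_ne ha]
      exact hinv a b h hmem hah hwh
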